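/- Let G be a connected finite graph and ω, ω' two 1-forms whose harmonic parts differ by an element of the dual lattice H₁(G,ℤ)^∨ (i.e., they induce the same character of H₁(G,ℤ)). Then the twisted vertex adjacency matrices A_ω and A_{ω'} are similar (conjugate by a diagonal unitary matrix composed with equality), and the twisted edge adjacency matrices W_{1,ω} and W_{1,ω'} are isospectral. -/

import Mathlib

/-- A finite (multi)graph, given by its set of vertices and its set of darts
(oriented edges): each unoriented edge corresponds to a pair `{d, inv d}` of darts. -/
structure Multigraph where
  V : Type
  D : Type
  fintypeV : Fintype V
  fintypeD : Fintype D
  decEqV : DecidableEq V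
  decEqD : DecidableEq D
  inv : D → D
  inv_inv : ∀ d, inv (inv d) = d
  inv_ne : ∀ d, inv d ≠ d
  head : D → V

instance (G : Multigraph) : Fintype G.V := G.fintypeV
instance (G : Multigraph) : Fintype G.D := G.fintypeD
instance (G : Multigraph) : DecidableEq G.V := G.decEqV
instance (G : Multigraph) : DecidableEq G.D := G.decEqD

namespace Multigraph

variable (G : Multigraph)

/-- The initial vertex `d(0)` of an oriented edge. -/
def tail (d : G.D) : G.V := G.head (G.inv d)

/-- Two vertices are adjacent if some oriented edge goes from one to the other. -/
def Adj (v w : G.V) : Prop := ∃ d : G.D, G.tail d = v ∧ G.head d = w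

/-- The graph is connected. -/
def Connected : Prop := Nonempty G.V ∧ ∀ v w : G.V, Relation.ReflTransGen G.Adj v w

/-- `ω` is a 1-form: it changes sign under reversal of orientation. -/
def IsOneForm (ω : G.D → ℝ) : Prop := ∀ d, ω (G.inv d) = - ω d

end Multigraph

namespace Multigraph

variable (G : Multigraph)

/-- The value `χ_ω(d) = e^{2πi ω(d)}` of the character attached to `ω` on a dart. -/
noncomputable def chi (ω : G.D → ℝ) (d : G.D) : ℂ :=
  Complex.exp (2 * Real.pi * Complex.I * (ω d))

/-- `a` feeds into `b`: `a(1) = b(0)` and `b ≠ a⁻¹`. -/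
def feeds (a b : G.D) : Prop := G.head a = G.tail b ∧ b ≠ G.inv a

instance (a b : G.D) : Decidable (G.feeds a b) :=
  inferInstanceAs (Decidable (_ ∧ _))

/-- The (untwisted) edge adjacency matrix `W₁`. -/
noncomputable def W1 : Matrix G.D G.D ℂ :=
  fun a b => if G.feeds a b then 1 else 0

/-- The edge adjacency matrix twisted by `χ_ω`: entry `χ_ω(b)` when `a` feeds into `b`. -/
noncomputable def W1t (ω : G.D → ℝ) : Matrix G.D G.D ℂ :=
  fun a b => if G.feeds a b then G.chi ω b else 0

/-- The vertex adjacency matrix twisted by `χ_ω`. -/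
noncomputable def A (ω : G.D → ℝ) : Matrix G.V G.V ℂ :=
  fun v w => ∑ d ∈ Finset.univ.filter (fun d : G.D => G.tail d = v ∧ G.head d = w),
    G.chi ω d

end Multigraph

namespace Multigraph

variable (G : Multigraph)

/-- The set of integral 1-cycles: `H₁(G,ℤ)`, realized as antisymmetric
integer-valued functions on darts with vanishing boundary at every vertex. -/
def H1set : Set (G.D → ℤ) :=
  {α | (∀ d, α (G.inv d) = - α d) ∧
    ∀ v : G.V, ∑ d ∈ Finset.univ.filter (fun d : G.D => G.head d = v), α d = 0}

/-- The pairing `ω(α)` between a 1-form `ω` and an integral 1-chain `α`. -/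
noncomputable def pairingZ (ω : G.D → ℝ) (α : G.D → ℤ) : ℝ :=
  (1 / 2) * ∑ d : G.D, ω d * (α d : ℝ)

end Multigraph


namespace Multigraph

/-- Walks: `IW l v w` means the list of darts `l` forms a walk from `v` to `w`. -/
inductive IW (G : Multigraph) : List G.D → G.V → G.V → Prop
  | nil (v : G.V) : G.IW [] v v
  | cons (d : G.D) {w : G.V} {l : List G.D} (h : G.IW l (G.head d) w) : G.IW (d :: l) (G.tail d) w

lemma IW.append {G : Multigraph} {l₁ l₂ : List G.D} {u v w : G.V}
    (h₁ : G.IW l₁ u v) (h₂ : G.IW l₂ v w) : G.IW (l₁ ++ l₂) u w := by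
  induction h₁ with
  | nil v => simpa using h₂
  | cons d h ih => exact .cons d (ih h₂)

lemma IW.single (G : Multigraph) (d : G.D) : G.IW [d] (G.tail d) (G.head d) :=
  .cons d (.nil _)

lemma IW.rev {G : Multigraph} {l : List G.D} {u v : G.V} (h : G.IW l u v) :
    G.IW (l.reverse.map G.inv) v u := by
  induction h with
  | nil v => exact .nil v
  | cons d h ih =>
    have h1 : G.IW [G.inv d] (G.head d) (G.tail d) := by
      have := IW.single G (G.inv d)
      simpa [Multigraph.tail, G.inv_inv] using this
    simpa using ih.append h1

lemma exists_walk {G : Multigraph} {u v : G.V} (h : Relation.ReflTransGen G.Adj u v) :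
    ∃ l, G.IW l u v := by
  induction h with
  | refl => exact ⟨[], .nil u⟩
  | tail hab hbc ih =>
    obtain ⟨l, hl⟩ := ih
    obtain ⟨d, hd1, hd2⟩ := hbc
    subst hd1; subst hd2
    exact ⟨l ++ [d], hl.append (IW.single G d)⟩

/-- The 1-chain (with `ℤ` coefficients) associated to a list of darts. -/
def chain (G : Multigraph) : List G.D → G.D → ℤ
  | [], _ => 0
  | x :: l, d => G.chain l d + (if d = x then 1 else 0) - (if d = G.inv x then 1 else 0)

lemma chain_inv (G : Multigraph) (l : List G.D) (d : G.D) :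
    G.chain l (G.inv d) = - G.chain l d := by
  induction l with
  | nil => simp [chain]
  | cons x l ih =>
    have h1 : (G.inv d = x) ↔ (d = G.inv x) :=
      ⟨fun h => by rw [← h, G.inv_inv], fun h => by rw [h, G.inv_inv]⟩
    have h2 : (G.inv d = G.inv x) ↔ (d = x) :=
      ⟨fun h => by rw [← G.inv_inv d, h, G.inv_inv], fun h => by rw [h]⟩
    simp only [chain, ih, h1, h2]
    ring

lemma chain_boundary {G : Multigraph} {l : List G.D} {a b : G.V} (h : G.IW l a b) (v : G.V) :
    ∑ d ∈ Finset.univ.filter (fun d => G.head d = v), G.chain l d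
      = (if b = v then (1:ℤ) else 0) - (if a = v then 1 else 0) := by
  induction h with
  | nil u => simp [chain]
  | cons x h ih =>
    simp only [chain]
    rw [Finset.sum_sub_distrib, Finset.sum_add_distrib, ih]
    have e1 : ∑ d ∈ Finset.univ.filter (fun d => G.head d = v), (if d = x then (1:ℤ) else 0)
        = if G.head x = v then 1 else 0 := by
      rw [Finset.sum_ite_eq' (Finset.univ.filter (fun d => G.head d = v)) x (fun _ => (1:ℤ))]
      simp
    have e2 : ∑ d ∈ Finset.univ.filter (fun d => G.head d = v),
        (if d = G.inv x then (1:ℤ) else 0) = if G.tail x = v then 1 else 0 := by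
      rw [Finset.sum_ite_eq' (Finset.univ.filter (fun d => G.head d = v)) (G.inv x)
        (fun _ => (1:ℤ))]
      simp [Multigraph.tail]
      rfl
    rw [e1, e2]
    ring

lemma sum_chain {G : Multigraph} {τ : G.D → ℝ} (hτ : ∀ d, τ (G.inv d) = - τ d) (l : List G.D) :
    ∑ d : G.D, τ d * (G.chain l d : ℝ) = 2 * (l.map τ).sum := by
  induction l with
  | nil => simp [chain]
  | cons x l ih =>
    simp only [chain, List.map_cons, List.sum_cons]
    push_cast
    simp only [mul_sub, mul_add]
    rw [Finset.sum_sub_distrib, Finset.sum_add_distrib, ih]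
    have e1 : ∑ d : G.D, τ d * (if d = x then (1:ℝ) else 0) = τ x := by
      simp [mul_ite]
    have e2 : ∑ d : G.D, τ d * (if d = G.inv x then (1:ℝ) else 0) = τ (G.inv x) := by
      simp [mul_ite]
    rw [e1, e2, hτ]
    ring

end Multigraph

open Polynomial in
lemma my_charpoly_conj {n : Type} [Fintype n] [DecidableEq n] (Q M : Matrix n n ℂ)
    (hQ : IsUnit Q.det) : (Q⁻¹ * M * Q).charpoly = M.charpoly := by
  have h1 : Q⁻¹ * Q = 1 := Matrix.nonsing_inv_mul Q hQ
  have key : Matrix.charmatrix (Q⁻¹ * M * Q) =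
      (C : ℂ →+* ℂ[X]).mapMatrix Q⁻¹ * Matrix.charmatrix M * (C : ℂ →+* ℂ[X]).mapMatrix Q := by
    unfold Matrix.charmatrix
    rw [Matrix.mul_sub, Matrix.sub_mul, map_mul, map_mul]
    congr 1
    have hc : Commute (Matrix.scalar n (X : ℂ[X])) ((C : ℂ →+* ℂ[X]).mapMatrix Q) :=
      Matrix.scalar_commute _ (fun r => Commute.all _ _) _
    rw [mul_assoc, hc.eq, ← mul_assoc, ← map_mul, h1, map_one, one_mul]
  rw [Matrix.charpoly, Matrix.charpoly, key, Matrix.det_mul, Matrix.det_mul]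
  have hd : ((C : ℂ →+* ℂ[X]).mapMatrix Q⁻¹).det * ((C : ℂ →+* ℂ[X]).mapMatrix Q).det = 1 := by
    rw [← Matrix.det_mul, ← map_mul, h1, map_one, Matrix.det_one]
  calc ((C : ℂ →+* ℂ[X]).mapMatrix Q⁻¹).det * (Matrix.charmatrix M).det *
        ((C : ℂ →+* ℂ[X]).mapMatrix Q).det
      = (Matrix.charmatrix M).det * (((C : ℂ →+* ℂ[X]).mapMatrix Q⁻¹).det *
        ((C : ℂ →+* ℂ[X]).mapMatrix Q).det) := by ring
    _ = (Matrix.charmatrix M).det := by rw [hd, mul_one]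

lemma my_sum_map_neg {α : Type*} (l : List α) (g : α → ℝ) :
    (l.map (fun a => -g a)).sum = -(l.map g).sum := by
  induction l with
  | nil => simp
  | cons x l ih => simp [ih]; ring


open Multigraph

/-- if the 1-forms `ω` and `ω'` induce the same character of
`H₁(G,ℤ)` — equivalently, `ω - ω'` pairs integrally with every integral 1-cycle,
i.e. the harmonic parts of `ω` and `ω'` differ by an element of the dual lattice
`H₁(G,ℤ)^∨` — then `A_ω` and `A_{ω'}` are similar, and `W_{1,ω}` and `W_{1,ω'}`
are isospectral (same characteristic polynomial). -/
theorem same_character_similar_isospectral (G : Multigraph) (hG : G.Connected)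
    (ω ω' : G.D → ℝ) (hω : G.IsOneForm ω) (hω' : G.IsOneForm ω')
    (h : ∀ α ∈ G.H1set, ∃ k : ℤ, G.pairingZ (ω - ω') α = (k : ℝ)) :
    (∃ P : Matrix G.V G.V ℂ, IsUnit P ∧ G.A ω' = P⁻¹ * G.A ω * P) ∧
    (G.W1t ω).charpoly = (G.W1t ω').charpoly := by
  classical
  set τ : G.D → ℝ := ω - ω' with hτdef
  have hτ : ∀ d, τ (G.inv d) = - τ d := by
    intro d
    simp only [hτdef, Pi.sub_apply, hω d, hω' d]
    ring
  -- Step 1: sums of τ over closed walks are integers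
  have hclosed : ∀ (l : List G.D) (v : G.V), G.IW l v v → ∃ k : ℤ, (l.map τ).sum = k := by
    intro l v hl
    have hmem : G.chain l ∈ G.H1set := by
      refine ⟨G.chain_inv l, fun w => ?_⟩
      rw [Multigraph.chain_boundary hl w]
      ring
    obtain ⟨k, hk⟩ := h _ hmem
    rw [Multigraph.pairingZ, Multigraph.sum_chain hτ l] at hk
    exact ⟨k, by linarith⟩
  -- Step 2: two walks with the same endpoints have τ-sums differing by an integer
  have hdiff : ∀ (p q : List G.D) (u v : G.V), G.IW p u v → G.IW q u v →
      ∃ k : ℤ, (p.map τ).sum - (q.map τ).sum = k := by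
    intro p q u v hp hq
    obtain ⟨k, hk⟩ := hclosed _ _ (hp.append hq.rev)
    rw [List.map_append, List.sum_append] at hk
    have hrevsum : ((q.reverse.map G.inv).map τ).sum = -((q.map τ).sum) := by
      rw [List.map_map, show (τ ∘ G.inv) = (fun d => -τ d) from funext hτ,
        my_sum_map_neg, List.map_reverse, List.sum_reverse]
    rw [hrevsum] at hk
    exact ⟨k, by linarith⟩
  -- Step 3: the potential f
  obtain ⟨hne, hconn⟩ := hG
  obtain ⟨v₀⟩ := hne
  have hex : ∀ v, ∃ l, G.IW l v₀ v := fun v => Multigraph.exists_walk (hconn v₀ v)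
  set f : G.V → ℝ := fun v => (((hex v).choose).map τ).sum with hfdef
  have hfspec : ∀ v, G.IW ((hex v).choose) v₀ v := fun v => (hex v).choose_spec
  have hkey : ∀ d, ∃ k : ℤ, τ d = f (G.head d) - f (G.tail d) + k := by
    intro d
    have hw : G.IW ((hex (G.tail d)).choose ++ [d]) v₀ (G.head d) :=
      (hfspec _).append (Multigraph.IW.single G d)
    obtain ⟨k, hk⟩ := hdiff _ _ _ _ hw (hfspec (G.head d))
    rw [List.map_append, List.sum_append] at hk
    simp only [List.map_cons, List.map_nil, List.sum_cons, List.sum_nil, add_zero] at hk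
    refine ⟨k, ?_⟩
    simp only [hfdef]
    linarith
  -- Step 4: exponential identities
  set c : ℝ → ℂ := fun x => Complex.exp (2 * Real.pi * Complex.I * x) with hcdef
  have hc_chi : ∀ (ρ : G.D → ℝ) d, G.chi ρ d = c (ρ d) := fun _ _ => rfl
  have hc_add : ∀ x y : ℝ, c (x + y) = c x * c y := by
    intro x y
    simp only [hcdef]
    rw [← Complex.exp_add]
    push_cast
    ring_nf
  have hc_eq : ∀ (x y : ℝ) (k : ℤ), x = y + k → c x = c y := by
    intro x y k hxy
    subst hxy
    rw [hc_add, hcdef]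
    have : (2 : ℂ) * Real.pi * Complex.I * ((k : ℝ) : ℂ) = (k : ℤ) * (2 * Real.pi * Complex.I) := by
      push_cast; ring
    simp only
    rw [this, Complex.exp_int_mul_two_pi_mul_I, mul_one]
  have key2 : ∀ d, G.chi ω d * c (-(f (G.head d))) = G.chi ω' d * c (-(f (G.tail d))) := by
    intro d
    obtain ⟨k, hk⟩ := hkey d
    have hk' : τ d = ω d - ω' d := rfl
    rw [hc_chi, hc_chi, ← hc_add, ← hc_add]
    apply hc_eq _ _ k
    rw [hk'] at hk
    linarith
  constructor
  -- Part 1: vertex adjacency matrices are similar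
  · set P : Matrix G.V G.V ℂ := Matrix.diagonal (fun v => c (-(f v))) with hPdef
    have hdet : IsUnit P.det := by
      rw [hPdef, Matrix.det_diagonal]
      exact isUnit_iff_ne_zero.mpr
        (Finset.prod_ne_zero_iff.mpr fun v _ => Complex.exp_ne_zero _)
    have hPunit : IsUnit P := (Matrix.isUnit_iff_isUnit_det P).mpr hdet
    have hcomm : P * G.A ω' = G.A ω * P := by
      ext v w
      rw [hPdef, Matrix.diagonal_mul, Matrix.mul_diagonal]
      simp only [Multigraph.A, Finset.mul_sum, Finset.sum_mul]
      refine Finset.sum_congr rfl fun d hd => ?_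
      simp only [Finset.mem_filter] at hd
      obtain ⟨-, hdv, hdw⟩ := hd
      rw [← hdv, ← hdw, mul_comm]
      exact (key2 d).symm
    refine ⟨P, hPunit, ?_⟩
    calc G.A ω' = (P⁻¹ * P) * G.A ω' := by rw [Matrix.nonsing_inv_mul P hdet, one_mul]
      _ = P⁻¹ * (P * G.A ω') := by rw [mul_assoc]
      _ = P⁻¹ * (G.A ω * P) := by rw [hcomm]
      _ = P⁻¹ * G.A ω * P := by rw [mul_assoc]
  -- Part 2: edge adjacency matrices are isospectral
  · set Q : Matrix G.D G.D ℂ := Matrix.diagonal (fun d => c (-(f (G.head d)))) with hQdef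
    have hdet : IsUnit Q.det := by
      rw [hQdef, Matrix.det_diagonal]
      exact isUnit_iff_ne_zero.mpr
        (Finset.prod_ne_zero_iff.mpr fun v _ => Complex.exp_ne_zero _)
    have hcomm : Q * G.W1t ω' = G.W1t ω * Q := by
      ext a b
      rw [hQdef, Matrix.diagonal_mul, Matrix.mul_diagonal]
      simp only [Multigraph.W1t]
      by_cases hf : G.feeds a b
      · simp only [hf, if_pos]
        have htb : G.tail b = G.head a := hf.1.symm
        rw [mul_comm]
        have := (key2 b).symm
        rw [htb] at this
        exact this
      · simp [hf]
    have hW : G.W1t ω' = Q⁻¹ * G.W1t ω * Q := by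
      calc G.W1t ω' = (Q⁻¹ * Q) * G.W1t ω' := by rw [Matrix.nonsing_inv_mul Q hdet, one_mul]
        _ = Q⁻¹ * (Q * G.W1t ω') := by rw [mul_assoc]
        _ = Q⁻¹ * (G.W1t ω * Q) := by rw [hcomm]
        _ = Q⁻¹ * G.W1t ω * Q := by rw [mul_assoc]
    rw [hW, my_charpoly_conj _ _ hdet]
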